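/- Suppose u : ℝ² → ℝ is analytic on a connected open set, nowhere zero, and a ∈ ℝ is a constant such that u_x u_y + u_x + 1 = 0 and u u_{xx} − u_x − u_y² + a u = 0 hold identically. Then a = 0. -/

import Mathlib

open Set

noncomputable def px (f : ℝ × ℝ → ℝ) (z : ℝ × ℝ) : ℝ := fderiv ℝ f z (1, 0)
noncomputable def py (f : ℝ × ℝ → ℝ) (z : ℝ × ℝ) : ℝ := fderiv ℝ f z (0, 1)

lemma lineX {f : ℝ × ℝ → ℝ} {p : ℝ × ℝ} (hf : DifferentiableAt ℝ f p) :
    HasDerivAt (fun x => f (x, p.2)) (px f p) p.1 := by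
  have h : HasDerivAt (fun x : ℝ => (x, p.2)) ((1 : ℝ), (0 : ℝ)) p.1 :=
    (hasDerivAt_id p.1).prodMk (hasDerivAt_const p.1 p.2)
  exact hf.hasFDerivAt.comp_hasDerivAt p.1 h

lemma lineY {f : ℝ × ℝ → ℝ} {p : ℝ × ℝ} (hf : DifferentiableAt ℝ f p) :
    HasDerivAt (fun y => f (p.1, y)) (py f p) p.2 := by
  have h : HasDerivAt (fun y : ℝ => (p.1, y)) ((0 : ℝ), (1 : ℝ)) p.2 :=
    (hasDerivAt_const p.2 p.1).prodMk (hasDerivAt_id p.2)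
  exact hf.hasFDerivAt.comp_hasDerivAt p.2 h

lemma px_an {f : ℝ × ℝ → ℝ} {U : Set (ℝ × ℝ)} (hf : AnalyticOnNhd ℝ f U) :
    AnalyticOnNhd ℝ (px f) U :=
  (ContinuousLinearMap.apply ℝ ℝ (((1 : ℝ), (0 : ℝ)) : ℝ × ℝ)).comp_analyticOnNhd hf.fderiv

lemma py_an {f : ℝ × ℝ → ℝ} {U : Set (ℝ × ℝ)} (hf : AnalyticOnNhd ℝ f U) :
    AnalyticOnNhd ℝ (py f) U :=
  (ContinuousLinearMap.apply ℝ ℝ (((0 : ℝ), (1 : ℝ)) : ℝ × ℝ)).comp_analyticOnNhd hf.fderiv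

lemma fderiv_clm_apply' {g : ℝ × ℝ → ((ℝ × ℝ) →L[ℝ] ℝ)} {p : ℝ × ℝ}
    (hg : DifferentiableAt ℝ g p) (c d : ℝ × ℝ) :
    fderiv ℝ (fun z => g z c) p d = fderiv ℝ g p d c := by
  have h := ((ContinuousLinearMap.apply ℝ ℝ c).hasFDerivAt.comp p hg.hasFDerivAt).fderiv
  rw [show (fun z => g z c) = (ContinuousLinearMap.apply ℝ ℝ c) ∘ g from rfl, h]
  rfl

lemma symXY {f : ℝ × ℝ → ℝ} {U : Set (ℝ × ℝ)} (hU : IsOpen U) (hf : AnalyticOnNhd ℝ f U)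
    {p : ℝ × ℝ} (hp : p ∈ U) : px (py f) p = py (px f) p := by
  have hev : ∀ᶠ z in nhds p, HasFDerivAt f (fderiv ℝ f z) z := by
    filter_upwards [hU.mem_nhds hp] with z hz using ((hf z hz).differentiableAt).hasFDerivAt
  have hd2 : DifferentiableAt ℝ (fderiv ℝ f) p := ((hf.fderiv) p hp).differentiableAt
  have hsym := second_derivative_symmetric_of_eventually hev hd2.hasFDerivAt
      (((1 : ℝ), (0 : ℝ)) : ℝ × ℝ) (((0 : ℝ), (1 : ℝ)) : ℝ × ℝ)
  show fderiv ℝ (fun z => fderiv ℝ f z ((0 : ℝ), (1 : ℝ))) p ((1 : ℝ), (0 : ℝ))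
      = fderiv ℝ (fun z => fderiv ℝ f z ((1 : ℝ), (0 : ℝ))) p ((0 : ℝ), (1 : ℝ))
  rw [fderiv_clm_apply' hd2, fderiv_clm_apply' hd2]
  exact hsym

lemma derivX_zero {U : Set (ℝ × ℝ)} (hU : IsOpen U) {p : ℝ × ℝ} (hp : p ∈ U)
    (g : ℝ × ℝ → ℝ) (hg : ∀ z ∈ U, g z = 0) {d : ℝ}
    (hd : HasDerivAt (fun x => g (x, p.2)) d p.1) : d = 0 := by
  have hmem : {x : ℝ | (x, p.2) ∈ U} ∈ nhds p.1 := by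
    have hc : Continuous (fun x : ℝ => (x, p.2)) := continuous_id.prodMk continuous_const
    exact (hU.preimage hc).mem_nhds (by simpa using hp)
  have hev : (fun x => g (x, p.2)) =ᶠ[nhds p.1] (fun _ => (0 : ℝ)) := by
    filter_upwards [hmem] with x hx using hg _ hx
  rw [← hd.deriv, hev.deriv_eq, deriv_const]

lemma derivY_zero {U : Set (ℝ × ℝ)} (hU : IsOpen U) {p : ℝ × ℝ} (hp : p ∈ U)
    (g : ℝ × ℝ → ℝ) (hg : ∀ z ∈ U, g z = 0) {d : ℝ}
    (hd : HasDerivAt (fun y => g (p.1, y)) d p.2) : d = 0 := by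
  have hmem : {y : ℝ | (p.1, y) ∈ U} ∈ nhds p.2 := by
    have hc : Continuous (fun y : ℝ => (p.1, y)) := continuous_const.prodMk continuous_id
    exact (hU.preimage hc).mem_nhds (by simpa using hp)
  have hev : (fun y => g (p.1, y)) =ᶠ[nhds p.2] (fun _ => (0 : ℝ)) := by
    filter_upwards [hmem] with y hy using hg _ hy
  rw [← hd.deriv, hev.deriv_eq, deriv_const]

lemma main_consistency {v : ℝ × ℝ → ℝ} {a : ℝ} {U : Set (ℝ × ℝ)} (hUo : IsOpen U)
    (hne : U.Nonempty) (hva : AnalyticOnNhd ℝ v U) (hnz : ∀ p ∈ U, v p ≠ 0)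
    (H1 : ∀ p ∈ U, px v p * py v p + px v p + 1 = 0)
    (H2 : ∀ p ∈ U, v p * px (px v) p - px v p - (py v p) ^ 2 + a * v p = 0) :
    a = 0 := by
  by_contra ha
  obtain ⟨p₀, hp₀⟩ := hne
  have hwA : AnalyticOnNhd ℝ (py v) U := py_an hva
  have hmA : AnalyticOnNhd ℝ (px v) U := px_an hva
  have hFA : AnalyticOnNhd ℝ (px (py v)) U := px_an hwA
  have hwyA : AnalyticOnNhd ℝ (py (py v)) U := py_an hwA
  have dv : ∀ z ∈ U, DifferentiableAt ℝ v z := fun z hz => (hva z hz).differentiableAt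
  have dw : ∀ z ∈ U, DifferentiableAt ℝ (py v) z := fun z hz => (hwA z hz).differentiableAt
  have dm : ∀ z ∈ U, DifferentiableAt ℝ (px v) z := fun z hz => (hmA z hz).differentiableAt
  have dF : ∀ z ∈ U, DifferentiableAt ℝ (px (py v)) z := fun z hz => (hFA z hz).differentiableAt
  have dwy : ∀ z ∈ U, DifferentiableAt ℝ (py (py v)) z :=
    fun z hz => (hwyA z hz).differentiableAt
  have sym1 : ∀ p ∈ U, py (px v) p = px (py v) p := fun p hp => (symXY hUo hva hp).symm
  have sym2 : ∀ p ∈ U, px (py (py v)) p = py (px (py v)) p := fun p hp => symXY hUo hwA hp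
  -- nonvanishing of w+1
  have hs : ∀ p ∈ U, py v p + 1 ≠ 0 := by
    intro p hp h
    have h1p := H1 p hp
    have : (1 : ℝ) = 0 := by linear_combination h1p - (px v p) * h
    exact one_ne_zero this
  -- H1 as a zero function identity
  have H1z : ∀ z ∈ U, px v z * py v z + px v z + 1 = 0 := H1
  -- S1x : differentiate H1 along x
  have S1x : ∀ p ∈ U, px (px v) p * py v p + px v p * px (py v) p + px (px v) p = 0 := by
    intro p hp
    have hd := (((lineX (dm p hp)).mul (lineX (dw p hp))).add (lineX (dm p hp))).add_const 1
    have raw := derivX_zero hUo hp (fun z => px v z * py v z + px v z + 1) H1z hd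
    linear_combination raw
  -- S1y : differentiate H1 along y
  have S1y : ∀ p ∈ U, px (py v) p * py v p + px v p * py (py v) p + px (py v) p = 0 := by
    intro p hp
    have hd := (((lineY (dm p hp)).mul (lineY (dw p hp))).add (lineY (dm p hp))).add_const 1
    have raw := derivY_zero hUo hp (fun z => px v z * py v z + px v z + 1) H1z hd
    linear_combination raw - (py v p + 1) * (sym1 p hp)
  -- Ieq : v*F = (w+1)*A - a*v*(w+1)^2  (algebraic consequence)
  have Ieq : ∀ z ∈ U, v z * px (py v) z - ((py v z + 1) *
      (py v z * py v z * py v z + py v z * py v z - 1) -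
      a * v z * ((py v z + 1) * (py v z + 1))) = 0 := by
    intro p hp
    linear_combination (v p * px (py v) p + (py v p + 1)) * (H1 p hp)
      - v p * (py v p + 1) * (S1x p hp) + (py v p + 1) ^ 2 * (H2 p hp)
  -- Mx : differentiate S1y along x
  have Mx : ∀ p ∈ U, px (px (py v)) p * py v p + px (py v) p * px (py v) p
      + px (px v) p * py (py v) p + px v p * py (px (py v)) p + px (px (py v)) p = 0 := by
    intro p hp
    have hd := (((lineX (dF p hp)).mul (lineX (dw p hp))).add
      ((lineX (dm p hp)).mul (lineX (dwy p hp)))).add (lineX (dF p hp))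
    have raw := derivX_zero hUo hp
      (fun z => px (py v) z * py v z + px v z * py (py v) z + px (py v) z) S1y hd
    linear_combination raw - px v p * (sym2 p hp)
  -- Ix, Iy : differentiate Ieq along x and y, then derive C1
  have C1 : ∀ z ∈ U, 2 * (py v z + 1) * (py v z + 1) *
      (py v z * py v z * py v z + py v z * py v z - 1 - a * v z * (py v z + 1)) *
      (py v z * py v z * py v z + py v z * py v z - 1 - a * v z * (py v z + 1)) +
      (2 * py v z + 1) * (py v z * py v z * py v z + py v z * py v z - 1) = 0 := by
    intro p hp
    have hvx := lineX (dv p hp); have hwx := lineX (dw p hp); have hFx := lineX (dF p hp)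
    have hvy := lineY (dv p hp); have hwy := lineY (dw p hp); have hFy := lineY (dF p hp)
    have hA3x := (((hwx.mul hwx).mul hwx).add (hwx.mul hwx)).sub_const 1
    have hA3y := (((hwy.mul hwy).mul hwy).add (hwy.mul hwy)).sub_const 1
    have htx := hwx.add_const 1
    have hty := hwy.add_const 1
    have hdx := (hvx.mul hFx).sub ((htx.mul hA3x).sub
      (((hasDerivAt_const p.1 a).mul hvx).mul (htx.mul htx)))
    have hdy := (hvy.mul hFy).sub ((hty.mul hA3y).sub
      (((hasDerivAt_const p.2 a).mul hvy).mul (hty.mul hty)))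
    have rawx := derivX_zero hUo hp (fun z => v z * px (py v) z - ((py v z + 1) *
      (py v z * py v z * py v z + py v z * py v z - 1) -
      a * v z * ((py v z + 1) * (py v z + 1)))) Ieq hdx
    have rawy := derivY_zero hUo hp (fun z => v z * px (py v) z - ((py v z + 1) *
      (py v z * py v z * py v z + py v z * py v z - 1) -
      a * v z * ((py v z + 1) * (py v z + 1)))) Ieq hdy
    simp only [Pi.mul_apply, Pi.add_apply, Pi.sub_apply] at rawx rawy
    have Ix : px v p * px (py v) p + v p * px (px (py v)) p
        - px (py v) p * ((py v p) ^ 3 + (py v p) ^ 2 - 1)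
        - (py v p + 1) * (3 * (py v p) ^ 2 + 2 * py v p) * px (py v) p
        + a * (px v p * (py v p + 1) ^ 2) + 2 * a * v p * (py v p + 1) * px (py v) p = 0 := by
      linear_combination rawx
    have Iy : py v p * px (py v) p + v p * py (px (py v)) p
        - py (py v) p * ((py v p) ^ 3 + (py v p) ^ 2 - 1)
        - (py v p + 1) * (3 * (py v p) ^ 2 + 2 * py v p) * py (py v) p
        + a * (py v p * (py v p + 1) ^ 2) + 2 * a * v p * (py v p + 1) * py (py v) p = 0 := by
      linear_combination rawy
    have h1p := H1 p hp
    have hwyy : py (py v) p = px (py v) p * (py v p + 1) ^ 2 := by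
      linear_combination (-(py v p + 1)) * (S1y p hp) + py (py v) p * h1p
    have hmxx : px (px v) p * (py v p + 1) ^ 2 = px (py v) p := by
      linear_combination (py v p + 1) * (S1x p hp) - px (py v) p * h1p
    have hXY : py (px (py v)) p = (py v p + 1) ^ 2 * px (px (py v)) p
        + 2 * (py v p + 1) * (px (py v) p) ^ 2 := by
      linear_combination (-(py v p + 1)) * (Mx p hp) + py (px (py v)) p * h1p
        + (py v p + 1) * px (px v) p * hwyy + (py v p + 1) * px (py v) p * hmxx
    have hC : 2 * (py v p + 1) * v p * (px (py v) p) ^ 2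
        + (2 * py v p + 1) * (px (py v) p + a * (py v p + 1) ^ 2) = 0 := by
      linear_combination Iy - (py v p + 1) ^ 2 * Ix - v p * hXY
        + (((py v p) ^ 3 + (py v p) ^ 2 - 1) + (py v p + 1) * (3 * (py v p) ^ 2 + 2 * py v p)
          - 2 * a * v p * (py v p + 1)) * hwyy
        + ((py v p + 1) * px (py v) p + a * (py v p + 1) ^ 3) * h1p
    have keyC1 : (py v p + 1) * (2 * (py v p + 1) ^ 2 *
        (((py v p) ^ 3 + (py v p) ^ 2 - 1) - a * v p * (py v p + 1)) ^ 2
        + (2 * py v p + 1) * ((py v p) ^ 3 + (py v p) ^ 2 - 1)) = 0 := by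
      linear_combination v p * hC
        - (4 * (py v p + 1) ^ 2 * (((py v p) ^ 3 + (py v p) ^ 2 - 1) - a * v p * (py v p + 1))
          + 2 * (py v p + 1) * (v p * px (py v) p
            - (py v p + 1) * (((py v p) ^ 3 + (py v p) ^ 2 - 1) - a * v p * (py v p + 1)))
          + (2 * py v p + 1)) * (Ieq p hp)
    have h := (mul_eq_zero.mp keyC1).resolve_left (hs p hp)
    linear_combination h
  -- differentiate C1 along x and y ; conclude a * P * (2w+1) = 0
  have aPT : ∀ p ∈ U, a * (((py v p) ^ 3 + (py v p) ^ 2 - 1) - a * v p * (py v p + 1))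
      * (2 * py v p + 1) = 0 := by
    intro p hp
    have hvx := lineX (dv p hp); have hwx := lineX (dw p hp)
    have hvy := lineY (dv p hp); have hwy := lineY (dw p hp)
    have hA3x := (((hwx.mul hwx).mul hwx).add (hwx.mul hwx)).sub_const 1
    have hA3y := (((hwy.mul hwy).mul hwy).add (hwy.mul hwy)).sub_const 1
    have htx := hwx.add_const 1
    have hty := hwy.add_const 1
    have hPx := hA3x.sub (((hasDerivAt_const p.1 a).mul hvx).mul htx)
    have hPy := hA3y.sub (((hasDerivAt_const p.2 a).mul hvy).mul hty)
    have hdx := (((((hasDerivAt_const p.1 (2:ℝ)).mul htx).mul htx).mul hPx).mul hPx).add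
      ((((hasDerivAt_const p.1 (2:ℝ)).mul hwx).add_const 1).mul hA3x)
    have hdy := (((((hasDerivAt_const p.2 (2:ℝ)).mul hty).mul hty).mul hPy).mul hPy).add
      ((((hasDerivAt_const p.2 (2:ℝ)).mul hwy).add_const 1).mul hA3y)
    have rawx := derivX_zero hUo hp (fun z => 2 * (py v z + 1) * (py v z + 1) *
      (py v z * py v z * py v z + py v z * py v z - 1 - a * v z * (py v z + 1)) *
      (py v z * py v z * py v z + py v z * py v z - 1 - a * v z * (py v z + 1)) +
      (2 * py v z + 1) * (py v z * py v z * py v z + py v z * py v z - 1)) C1 hdx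
    have rawy := derivY_zero hUo hp (fun z => 2 * (py v z + 1) * (py v z + 1) *
      (py v z * py v z * py v z + py v z * py v z - 1 - a * v z * (py v z + 1)) *
      (py v z * py v z * py v z + py v z * py v z - 1 - a * v z * (py v z + 1)) +
      (2 * py v z + 1) * (py v z * py v z * py v z + py v z * py v z - 1)) C1 hdy
    simp only [Pi.mul_apply, Pi.add_apply, Pi.sub_apply] at rawx rawy
    have h1p := H1 p hp
    have hwyy : py (py v) p = px (py v) p * (py v p + 1) ^ 2 := by
      linear_combination (-(py v p + 1)) * (S1y p hp) + py (py v) p * h1p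
    have keyE : (py v p + 1) ^ 3 * (a * (((py v p) ^ 3 + (py v p) ^ 2 - 1)
        - a * v p * (py v p + 1)) * (2 * py v p + 1)) = 0 := by
      linear_combination
        ((4 * (py v p + 1) * (((py v p) ^ 3 + (py v p) ^ 2 - 1) - a * v p * (py v p + 1)) ^ 2
          + 4 * (py v p + 1) ^ 2 * (((py v p) ^ 3 + (py v p) ^ 2 - 1) - a * v p * (py v p + 1))
            * ((3 * (py v p) ^ 2 + 2 * py v p) - a * v p)
          + 2 * ((py v p) ^ 3 + (py v p) ^ 2 - 1)
          + (2 * py v p + 1) * (3 * (py v p) ^ 2 + 2 * py v p)) / 4) * hwyy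
        + a * (py v p + 1) ^ 4 * (((py v p) ^ 3 + (py v p) ^ 2 - 1)
          - a * v p * (py v p + 1)) * h1p
        - (1 / 4) * rawy + ((py v p + 1) ^ 2 / 4) * rawx
    exact (mul_eq_zero.mp keyE).resolve_left (pow_ne_zero 3 (hs p hp))
  -- a * P = 0 on U
  have aP : ∀ z ∈ U, a * (py v z * py v z * py v z + py v z * py v z - 1
      - a * v z * (py v z + 1)) = 0 := by
    intro p hp
    by_cases hT : (2 * py v p + 1) = 0
    · have hP2 : ((py v p + 1) * (((py v p) ^ 3 + (py v p) ^ 2 - 1)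
          - a * v p * (py v p + 1))) ^ 2 = 0 := by
        linear_combination (1 / 2) * (C1 p hp) - (((py v p) ^ 3 + (py v p) ^ 2 - 1) / 2) * hT
      have hP0 := (pow_eq_zero_iff (two_ne_zero)).mp hP2
      have hP0' := (mul_eq_zero.mp hP0).resolve_left (hs p hp)
      linear_combination a * hP0'
    · have h := (mul_eq_zero.mp (aPT p hp)).resolve_right hT
      linear_combination h
  -- differentiate aP along x and y
  have G1x : ∀ p ∈ U, a * ((3 * (py v p) ^ 2 + 2 * py v p) * px (py v) p
      - a * (px v p * (py v p + 1) + v p * px (py v) p)) = 0 := by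
    intro p hp
    have hvx := lineX (dv p hp); have hwx := lineX (dw p hp)
    have hA3x := (((hwx.mul hwx).mul hwx).add (hwx.mul hwx)).sub_const 1
    have htx := hwx.add_const 1
    have hd := (hasDerivAt_const p.1 a).mul
      (hA3x.sub (((hasDerivAt_const p.1 a).mul hvx).mul htx))
    have raw := derivX_zero hUo hp (fun z => a * (py v z * py v z * py v z
      + py v z * py v z - 1 - a * v z * (py v z + 1))) aP hd
    simp only [Pi.mul_apply, Pi.add_apply, Pi.sub_apply] at raw
    linear_combination raw
  have G1y : ∀ p ∈ U, a * ((3 * (py v p) ^ 2 + 2 * py v p) * py (py v) p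
      - a * (py v p * (py v p + 1) + v p * py (py v) p)) = 0 := by
    intro p hp
    have hvy := lineY (dv p hp); have hwy := lineY (dw p hp)
    have hA3y := (((hwy.mul hwy).mul hwy).add (hwy.mul hwy)).sub_const 1
    have hty := hwy.add_const 1
    have hd := (hasDerivAt_const p.2 a).mul
      (hA3y.sub (((hasDerivAt_const p.2 a).mul hvy).mul hty))
    have raw := derivY_zero hUo hp (fun z => a * (py v z * py v z * py v z
      + py v z * py v z - 1 - a * v z * (py v z + 1))) aP hd
    simp only [Pi.mul_apply, Pi.add_apply, Pi.sub_apply] at raw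
    linear_combination raw
  -- a^2 * (2w+1) = 0, hence 2w + 1 = 0 on U
  have T0 : ∀ z ∈ U, 2 * py v z + 1 = 0 := by
    intro p hp
    have h1p := H1 p hp
    have hwyy : py (py v) p = px (py v) p * (py v p + 1) ^ 2 := by
      linear_combination (-(py v p + 1)) * (S1y p hp) + py (py v) p * h1p
    have keyG : (py v p + 1) * (a ^ 2 * (2 * py v p + 1)) = 0 := by
      linear_combination (a * (3 * (py v p) ^ 2 + 2 * py v p) - a ^ 2 * v p) * hwyy
        + a ^ 2 * (py v p + 1) ^ 2 * h1p - G1y p hp + (py v p + 1) ^ 2 * (G1x p hp)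
    have h := (mul_eq_zero.mp keyG).resolve_left (hs p hp)
    rcases mul_eq_zero.mp h with h2 | h2
    · exact absurd ((pow_eq_zero_iff (two_ne_zero)).mp h2) ha
    · exact h2
  -- differentiate T0 along x at p₀ : F = 0 there
  have hF0 : px (py v) p₀ = 0 := by
    have hd := ((hasDerivAt_const p₀.1 (2:ℝ)).mul (lineX (dw p₀ hp₀))).add_const 1
    have raw := derivX_zero hUo hp₀ (fun z => 2 * py v z + 1) T0 hd
    linear_combination (1 / 2) * raw
  -- conclude a^2 = 0, contradiction
  have hA2 : a ^ 2 = 0 := by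
    linear_combination (G1x p₀ hp₀)
      - (a * (3 * (py v p₀) ^ 2 + 2 * py v p₀) - a ^ 2 * v p₀) * hF0
      + a ^ 2 * (H1 p₀ hp₀)
  exact ha ((pow_eq_zero_iff (two_ne_zero)).mp hA2)

/-- Consistency of the system u_x u_y + u_x + 1 = 0,
u u_{xx} - u_x - u_y² + a u = 0 forces a = 0: if u is analytic on a nonempty
connected open set, nowhere zero there, and both equations hold identically on it,
then a = 0. -/
theorem consistency_forces_a_zero (u : ℝ → ℝ → ℝ) (a : ℝ) (U : Set (ℝ × ℝ))
    (hUo : IsOpen U) (hUc : IsConnected U)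
    (hu : AnalyticOnNhd ℝ (fun p : ℝ × ℝ => u p.1 p.2) U)
    (hne : ∀ p ∈ U, u p.1 p.2 ≠ 0)
    (h1 : ∀ p ∈ U, deriv (fun s => u s p.2) p.1 * deriv (u p.1) p.2
      + deriv (fun s => u s p.2) p.1 + 1 = 0)
    (h2 : ∀ p ∈ U, u p.1 p.2 * deriv (fun s => deriv (fun r => u r p.2) s) p.1
      - deriv (fun s => u s p.2) p.1 - (deriv (u p.1) p.2) ^ 2
      + a * u p.1 p.2 = 0) :
    a = 0 := by
  set v : ℝ × ℝ → ℝ := fun p => u p.1 p.2 with hvdef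
  have hva : AnalyticOnNhd ℝ v U := hu
  have hmA : AnalyticOnNhd ℝ (px v) U := px_an hva
  have e1 : ∀ p ∈ U, deriv (fun s => u s p.2) p.1 = px v p := by
    intro p hp
    exact (lineX (hva p hp).differentiableAt).deriv
  have e2 : ∀ p ∈ U, deriv (u p.1) p.2 = py v p := by
    intro p hp
    exact (lineY (hva p hp).differentiableAt).deriv
  have e3 : ∀ p ∈ U, deriv (fun s => deriv (fun r => u r p.2) s) p.1 = px (px v) p := by
    intro p hp
    have hmem : {x : ℝ | (x, p.2) ∈ U} ∈ nhds p.1 := by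
      have hc : Continuous (fun x : ℝ => (x, p.2)) := continuous_id.prodMk continuous_const
      exact (hUo.preimage hc).mem_nhds (by simpa using hp)
    have hev : (fun s => deriv (fun r => u r p.2) s) =ᶠ[nhds p.1]
        (fun s => px v (s, p.2)) := by
      filter_upwards [hmem] with s hsm
      exact (lineX (hva (s, p.2) hsm).differentiableAt).deriv
    rw [hev.deriv_eq]
    exact (lineX (hmA p hp).differentiableAt).deriv
  have H1 : ∀ p ∈ U, px v p * py v p + px v p + 1 = 0 := by
    intro p hp
    have h := h1 p hp
    rw [e1 p hp, e2 p hp] at h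
    exact h
  have H2 : ∀ p ∈ U, v p * px (px v) p - px v p - (py v p) ^ 2 + a * v p = 0 := by
    intro p hp
    have h := h2 p hp
    rw [e1 p hp, e2 p hp, e3 p hp] at h
    exact h
  exact main_consistency hUo hUc.nonempty hva hne H1 H2
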